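/- Gradient bounds for the mixture-of-regressions Gordon maps. For α > 0, β ≥ 0 with ρ = β/α, σ ≥ 0 and κ > 1, define F_σ(α,β) = 1 − A_σ(ρ) + B_σ(ρ) and G_{κ,σ}(α,β) = √( ρ²·B_σ(ρ)² + (1/(κ−1))·(1 + σ² − F_σ(α,β)² − ρ²·B_σ(ρ)²) ). Then: (a) for all 0 ≤ σ ≤ 1/2 and all (α, β) with α ≥ 1/2 and 0 ≤ β/α ≤ 1/4, the gradient of F_σ satisfies |∂F_σ/∂α(α,β)| + |∂F_σ/∂β(α,β)| ≤ 0.5; (b) there exists a universal constant C > 0 such that for all 0 ≤ σ ≤ 1/2, all κ ≥ C, and all (α, β) with α ≥ 1/2 and 0 ≤ β/α ≤ 1/4, |∂G_{κ,σ}/∂α(α,β)| + |∂G_{κ,σ}/∂β(α,β)| ≤ 0.98. -/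

import Mathlib

set_option maxHeartbeats 1000000

noncomputable section

/-- `A_σ(ρ) = (2/π) arctan(√(ρ² + σ² + σ²ρ²))`. -/
def Amap (σ ρ : ℝ) : ℝ :=
  2 / Real.pi * Real.arctan (Real.sqrt (ρ ^ 2 + σ ^ 2 + σ ^ 2 * ρ ^ 2))

/-- `B_σ(ρ) = (2/π) √(ρ² + σ² + σ²ρ²)/(1 + ρ²)`. -/
def Bmap (σ ρ : ℝ) : ℝ :=
  2 / Real.pi * Real.sqrt (ρ ^ 2 + σ ^ 2 + σ ^ 2 * ρ ^ 2) / (1 + ρ ^ 2)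

/-- `F_σ(α,β) = 1 − A_σ(β/α) + B_σ(β/α)`. -/
def Fm (σ α β : ℝ) : ℝ := 1 - Amap σ (β / α) + Bmap σ (β / α)

/-- `G_{κ,σ}(α,β) = √( ρ²B_σ(ρ)² + (1/(κ−1))(1 + σ² − F_σ² − ρ²B_σ(ρ)²) )`, `ρ = β/α`. -/
def Gm (κ σ α β : ℝ) : ℝ :=
  Real.sqrt ((β / α) ^ 2 * Bmap σ (β / α) ^ 2 +
    1 / (κ - 1) * (1 + σ ^ 2 - Fm σ α β ^ 2 - (β / α) ^ 2 * Bmap σ (β / α) ^ 2))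

end

open Real

private lemma arctan_ge_div (x : ℝ) (hx : 0 ≤ x) : x / (1 + x ^ 2) ≤ Real.arctan x := by
  have key : ∀ t : ℝ, HasDerivAt (fun t => Real.arctan t - t / (1 + t ^ 2))
      (2 * t ^ 2 / (1 + t ^ 2) ^ 2) t := by
    intro t
    have h1 : (0:ℝ) < 1 + t ^ 2 := by positivity
    have hd : HasDerivAt (fun t : ℝ => t / (1 + t ^ 2))
        ((1 * (1 + t ^ 2) - t * (2 * t)) / (1 + t ^ 2) ^ 2) t := by
      exact (hasDerivAt_id t).div (by simpa using ((hasDerivAt_pow 2 t).const_add 1)) h1.ne'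
    have := (Real.hasDerivAt_arctan t).sub hd
    refine this.congr_deriv ?_
    field_simp
    ring
  have hmono : MonotoneOn (fun t => Real.arctan t - t / (1 + t ^ 2)) (Set.Ici (0:ℝ)) := by
    apply monotoneOn_of_deriv_nonneg (convex_Ici 0)
    · exact fun t _ => ((key t).differentiableAt).continuousAt.continuousWithinAt
    · intro t ht
      exact ((key t).differentiableAt).differentiableWithinAt
    · intro t ht
      rw [(key t).deriv]
      positivity
  have := hmono (Set.mem_Ici.2 le_rfl) (Set.mem_Ici.2 hx) hx
  simp at this
  linarith

private lemma hasDerivAt_core (σ ρ : ℝ) (hq : 0 < ρ^2 + σ^2 + σ^2*ρ^2) :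
    HasDerivAt (fun x => 1 - Amap σ x + Bmap σ x)
      (-(ρ * (2/Real.pi * ((ρ^2+σ^2+σ^2*ρ^2) + ρ^2) /
        (Real.sqrt (ρ^2+σ^2+σ^2*ρ^2) * (1+ρ^2)^2)))) ρ ∧
    HasDerivAt (fun x => x * Bmap σ x)
      (2/Real.pi * ((ρ^2+σ^2+σ^2*ρ^2) + ρ^2) /
        (Real.sqrt (ρ^2+σ^2+σ^2*ρ^2) * (1+ρ^2)^2)) ρ := by
  have hπ : (0:ℝ) < Real.pi := Real.pi_pos
  have hinner : HasDerivAt (fun x : ℝ => x^2 + σ^2 + σ^2*x^2) (2*ρ + σ^2*(2*ρ)) ρ := by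
    have h1 := (hasDerivAt_pow 2 ρ).add_const (σ^2)
    have h2 := (hasDerivAt_pow 2 ρ).const_mul (σ^2)
    refine (h1.add h2).congr_deriv ?_ <;> push_cast <;> ring
  have hsq : HasDerivAt (fun x : ℝ => Real.sqrt (x^2+σ^2+σ^2*x^2))
      (1/(2*Real.sqrt (ρ^2+σ^2+σ^2*ρ^2)) * (2*ρ + σ^2*(2*ρ))) ρ :=
    (Real.hasDerivAt_sqrt hq.ne').comp ρ hinner
  have hA : HasDerivAt (fun x => Amap σ x)
      (2/Real.pi * (1/(1 + Real.sqrt (ρ^2+σ^2+σ^2*ρ^2)^2) *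
        (1/(2*Real.sqrt (ρ^2+σ^2+σ^2*ρ^2)) * (2*ρ + σ^2*(2*ρ))))) ρ := by
    unfold Amap
    exact ((Real.hasDerivAt_arctan _).comp ρ hsq).const_mul (2/Real.pi)
  have hden : HasDerivAt (fun x : ℝ => 1 + x^2) (2*ρ) ρ := by
    simpa using (hasDerivAt_pow 2 ρ).const_add 1
  have hdenne : (1:ℝ) + ρ^2 ≠ 0 := by positivity
  have hB : HasDerivAt (fun x => Bmap σ x)
      ((2/Real.pi * (1/(2*Real.sqrt (ρ^2+σ^2+σ^2*ρ^2)) * (2*ρ + σ^2*(2*ρ))) * (1+ρ^2) -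
        2/Real.pi * Real.sqrt (ρ^2+σ^2+σ^2*ρ^2) * (2*ρ)) / (1+ρ^2)^2) ρ := by
    unfold Bmap
    exact (hsq.const_mul (2/Real.pi)).div hden hdenne
  have hBval : Bmap σ ρ = 2/Real.pi * Real.sqrt (ρ^2+σ^2+σ^2*ρ^2) / (1+ρ^2) := rfl
  have hFd := ((hasDerivAt_const ρ (1:ℝ)).sub hA).add hB
  have hTd := (hasDerivAt_id ρ).mul hB
  rw [hBval] at hTd
  set s : ℝ := Real.sqrt (ρ^2+σ^2+σ^2*ρ^2) with hsdef
  have hs : 0 < s := Real.sqrt_pos.2 hq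
  have hs2 : s^2 = ρ^2+σ^2+σ^2*ρ^2 := Real.sq_sqrt hq.le
  have hsig : σ^2 = (s^2 - ρ^2)/(1+ρ^2) := by
    field_simp
    linarith [hs2]
  constructor
  · refine hFd.congr_deriv ?_
    rw [hsig]
    field_simp
    ring
  · refine hTd.congr_deriv ?_
    simp only [id]
    rw [hsig]
    field_simp
    ring

private lemma poly_key (x y : ℝ) (hx0 : 0 ≤ x) (hx : x ≤ 1/16) (hy0 : 0 ≤ y) (hy : y ≤ 1/4) :
    ((x+y+y*x) + x)^2 ≤ 0.37515 * ((x+y+y*x) * (1+x)^4) := by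
  nlinarith [mul_nonneg hx0 hy0, mul_nonneg (mul_nonneg hx0 hy0) hy0,
    mul_nonneg (mul_nonneg hx0 hx0) hy0, sq_nonneg (x+y), sq_nonneg (x-y),
    mul_nonneg (sub_nonneg.2 hx) (sub_nonneg.2 hy),
    mul_nonneg (mul_nonneg hx0 hx0) hx0, mul_nonneg hy0 hy0]

private lemma bounds_core (σ ρ : ℝ) (hσ0 : 0 ≤ σ) (hσ1 : σ ≤ 1/2) (hρ0 : 0 < ρ) (hρ1 : ρ ≤ 1/4) :
    0 < 2/Real.pi * ((ρ^2+σ^2+σ^2*ρ^2) + ρ^2) /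
        (Real.sqrt (ρ^2+σ^2+σ^2*ρ^2) * (1+ρ^2)^2) ∧
    2/Real.pi * ((ρ^2+σ^2+σ^2*ρ^2) + ρ^2) /
        (Real.sqrt (ρ^2+σ^2+σ^2*ρ^2) * (1+ρ^2)^2) ≤ 0.39 ∧
    ρ * (2/Real.pi * ((ρ^2+σ^2+σ^2*ρ^2) + ρ^2) /
        (Real.sqrt (ρ^2+σ^2+σ^2*ρ^2) * (1+ρ^2)^2)) ≤ 2 * (ρ * Bmap σ ρ) ∧
    0 < ρ * Bmap σ ρ ∧
    0 < 1 - Amap σ ρ + Bmap σ ρ ∧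
    1 - Amap σ ρ + Bmap σ ρ ≤ 1.4 ∧
    (1 - Amap σ ρ + Bmap σ ρ)^2 ≤ 1 + σ^2 := by
  have hπ : (0:ℝ) < Real.pi := Real.pi_pos
  have hq : 0 < ρ^2+σ^2+σ^2*ρ^2 := by positivity
  have hx : ρ^2 ≤ 1/16 := by nlinarith
  have hy : σ^2 ≤ 1/4 := by nlinarith
  have h2π : 2/Real.pi ≤ 0.6367 := by
    rw [div_le_iff₀ hπ]
    nlinarith [Real.pi_gt_d6]
  have h2π0 : (0:ℝ) < 2/Real.pi := by positivity
  set s : ℝ := Real.sqrt (ρ^2+σ^2+σ^2*ρ^2) with hsdef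
  have hs : 0 < s := Real.sqrt_pos.2 hq
  have hs2 : s^2 = ρ^2+σ^2+σ^2*ρ^2 := Real.sq_sqrt hq.le
  have hsρ : ρ ≤ s := (Real.le_sqrt hρ0.le hq.le).2 (by nlinarith [sq_nonneg σ, sq_nonneg (σ*ρ)])
  have hsu : s ≤ 0.58 := by
    apply Real.sqrt_le_iff.2
    constructor
    · norm_num
    · nlinarith [mul_le_mul hy hx (sq_nonneg ρ) (by norm_num : (0:ℝ) ≤ 1/4)]
  have hden : (0:ℝ) < 1 + ρ^2 := by positivity
  have hb0 : (0:ℝ) < s * (1+ρ^2)^2 := by positivity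
  have hmain : (ρ^2+σ^2+σ^2*ρ^2) + ρ^2 ≤ 0.6125 * (s * (1+ρ^2)^2) := by
    have key := poly_key (ρ^2) (σ^2) (sq_nonneg ρ) hx (sq_nonneg σ) hy
    have key2 : ((ρ^2+σ^2+σ^2*ρ^2) + ρ^2)^2 ≤ (0.6125 * (s * (1+ρ^2)^2))^2 := by
      have expand : (0.6125 * (s*(1+ρ^2)^2))^2 = 0.37515625 * ((ρ^2+σ^2+σ^2*ρ^2) * (1+ρ^2)^4) := by
        rw [mul_pow, mul_pow, hs2]; ring
      rw [expand]
      nlinarith [key, hq, pow_pos hden 4, mul_pos hq (pow_pos hden 4)]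
    exact (pow_le_pow_iff_left₀ (by positivity) (by positivity) two_ne_zero).1 key2
  have hD0 : 0 < 2/Real.pi * ((ρ^2+σ^2+σ^2*ρ^2) + ρ^2) / (s * (1+ρ^2)^2) := by positivity
  have hDle : 2/Real.pi * ((ρ^2+σ^2+σ^2*ρ^2) + ρ^2) / (s * (1+ρ^2)^2) ≤ 0.39 := by
    rw [div_le_iff₀ hb0]
    calc 2/Real.pi * ((ρ^2+σ^2+σ^2*ρ^2) + ρ^2) ≤ 0.6367 * ((ρ^2+σ^2+σ^2*ρ^2) + ρ^2) := by
          apply mul_le_mul_of_nonneg_right h2π (by positivity)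
      _ ≤ 0.6367 * (0.6125 * (s * (1+ρ^2)^2)) := by
          exact mul_le_mul_of_nonneg_left hmain (by norm_num)
      _ ≤ 0.39 * (s * (1+ρ^2)^2) := by nlinarith [hb0]
  have hBval : Bmap σ ρ = 2/Real.pi * s / (1+ρ^2) := rfl
  have hT0 : 0 < ρ * Bmap σ ρ := by rw [hBval]; positivity
  have hρD2T : ρ * (2/Real.pi * ((ρ^2+σ^2+σ^2*ρ^2) + ρ^2) / (s * (1+ρ^2)^2)) ≤ 2 * (ρ * Bmap σ ρ) := by
    rw [hBval]
    rw [show ρ * (2/Real.pi * ((ρ^2+σ^2+σ^2*ρ^2) + ρ^2) / (s * (1+ρ^2)^2))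
        = (ρ * (2/Real.pi) * ((ρ^2+σ^2+σ^2*ρ^2) + ρ^2)) / (s * (1+ρ^2)^2) from by ring,
      show 2 * (ρ * (2/Real.pi * s / (1+ρ^2))) = (2 * ρ * (2/Real.pi) * s) / (1+ρ^2) from by ring]
    rw [div_le_div_iff₀ hb0 hden]
    have h1 : (ρ^2+σ^2+σ^2*ρ^2) + ρ^2 ≤ 2*s^2*(1+ρ^2) := by
      rw [hs2]
      nlinarith [mul_nonneg hq.le (sq_nonneg ρ), sq_nonneg σ, mul_nonneg (sq_nonneg σ) (sq_nonneg ρ)]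
    have hfac : (0:ℝ) ≤ ρ * (2/Real.pi) * (1+ρ^2) := by positivity
    nlinarith [mul_le_mul_of_nonneg_left h1 hfac]
  have hA0 : 0 ≤ Amap σ ρ := by
    unfold Amap
    have h0 : (0:ℝ) ≤ Real.arctan (Real.sqrt (ρ^2+σ^2+σ^2*ρ^2)) := by
      refine le_trans ?_ (arctan_ge_div _ (Real.sqrt_nonneg _))
      positivity
    exact mul_nonneg h2π0.le h0
  have hA1 : Amap σ ρ < 1 := by
    unfold Amap
    have h := Real.arctan_lt_pi_div_two (Real.sqrt (ρ^2+σ^2+σ^2*ρ^2))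
    calc 2/Real.pi * Real.arctan (Real.sqrt (ρ^2+σ^2+σ^2*ρ^2))
        < 2/Real.pi * (Real.pi/2) := mul_lt_mul_of_pos_left h h2π0
      _ = 1 := by field_simp
  have hB0 : 0 ≤ Bmap σ ρ := by rw [hBval]; positivity
  have hdiff : Bmap σ ρ - Amap σ ρ ≤ 0.37 * σ^2 := by
    have harc := arctan_ge_div s hs.le
    have e1 : s/(1+ρ^2) - s/(1+s^2) = s * σ^2 / (1+s^2) := by
      rw [hs2]
      field_simp
      ring
    have hAval : Amap σ ρ = 2/Real.pi * Real.arctan s := rfl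
    have hABdiff : Bmap σ ρ - Amap σ ρ ≤ 2/Real.pi * (s * σ^2 / (1+s^2)) := by
      rw [hBval, hAval, ← e1]
      have h3 : 2/Real.pi * (s/(1+s^2)) ≤ 2/Real.pi * Real.arctan s :=
        mul_le_mul_of_nonneg_left harc h2π0.le
      have h4 : 2/Real.pi * s / (1+ρ^2) - 2/Real.pi * Real.arctan s
          ≤ 2/Real.pi * s / (1+ρ^2) - 2/Real.pi * (s/(1+s^2)) := by linarith
      calc 2/Real.pi * s / (1+ρ^2) - 2/Real.pi * Real.arctan s
          ≤ 2/Real.pi * s / (1+ρ^2) - 2/Real.pi * (s/(1+s^2)) := h4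
        _ = 2/Real.pi * (s/(1+ρ^2) - s/(1+s^2)) := by ring
    have h2 : 2/Real.pi * (s * σ^2 / (1+s^2)) ≤ 0.37 * σ^2 := by
      have hs21 : (1:ℝ) ≤ 1 + s^2 := by nlinarith [sq_nonneg s]
      have h5 : s * σ^2 / (1+s^2) ≤ s * σ^2 := div_le_self (by positivity) hs21
      calc 2/Real.pi * (s * σ^2 / (1+s^2)) ≤ 0.6367 * (s * σ^2) := by
            apply mul_le_mul h2π h5 (by positivity) (by norm_num)
        _ ≤ 0.37 * σ^2 := by nlinarith [sq_nonneg σ]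
    linarith
  have hF0 : 0 < 1 - Amap σ ρ + Bmap σ ρ := by linarith
  have hFle : 1 - Amap σ ρ + Bmap σ ρ ≤ 1.4 := by nlinarith [hdiff, sq_nonneg σ]
  have hF2 : (1 - Amap σ ρ + Bmap σ ρ)^2 ≤ 1 + σ^2 := by
    have hFd : 1 - Amap σ ρ + Bmap σ ρ ≤ 1 + 0.37*σ^2 := by linarith
    nlinarith [hF0, hFd, sq_nonneg σ]
  exact ⟨hD0, hDle, hρD2T, hT0, hF0, hFle, hF2⟩

/-- Gradient bounds for the mixture-of-regressions Gordon maps. -/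
theorem mixture_gradient_bounds :
    (∀ σ α β : ℝ, 0 ≤ σ → σ ≤ 1 / 2 → 1 / 2 ≤ α → 0 ≤ β → β / α ≤ 1 / 4 →
        |deriv (fun a => Fm σ a β) α| + |deriv (fun b => Fm σ α b) β| ≤ 0.5) ∧
    ∃ C : ℝ, 0 < C ∧
      ∀ σ κ α β : ℝ, 0 ≤ σ → σ ≤ 1 / 2 → 1 < κ → κ ≥ C →
        1 / 2 ≤ α → 0 ≤ β → β / α ≤ 1 / 4 →
        |deriv (fun a => Gm κ σ a β) α| + |deriv (fun b => Gm κ σ α b) β| ≤ 0.98 := by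
  constructor
  · -- part (a)
    intro σ α β hσ0 hσ1 hα hβ hρ1
    have hα0 : (0:ℝ) < α := lt_of_lt_of_le (by norm_num) hα
    rcases eq_or_lt_of_le hβ with hβ0 | hβ0
    · -- β = 0
      subst hβ0
      have e1 : (fun a => Fm σ a 0) = (fun _ : ℝ => 1 - Amap σ 0 + Bmap σ 0) := by
        funext a; simp [Fm]
      have heven : (fun b => Fm σ α (-b)) = (fun b => Fm σ α b) := by
        funext b; simp [Fm, Amap, Bmap, neg_div, neg_sq]
      have h2 := deriv_comp_neg (fun b => Fm σ α b) (0:ℝ)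
      rw [heven] at h2
      simp only [neg_zero] at h2
      have hd2 : deriv (fun b => Fm σ α b) 0 = 0 := by linarith
      rw [e1, deriv_const, hd2]
      norm_num
    · -- β > 0
      have hρ0 : 0 < β/α := div_pos hβ0 hα0
      have hq : 0 < (β/α)^2 + σ^2 + σ^2*(β/α)^2 := by positivity
      obtain ⟨hFd, -⟩ := hasDerivAt_core σ (β/α) hq
      obtain ⟨hD0, hDle, -, -, -, -, -⟩ := bounds_core σ (β/α) hσ0 hσ1 hρ0 hρ1
      set D := 2/Real.pi * (((β/α)^2+σ^2+σ^2*(β/α)^2) + (β/α)^2) /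
        (Real.sqrt ((β/α)^2+σ^2+σ^2*(β/α)^2) * (1+(β/α)^2)^2) with hDdef
      have hchainα : HasDerivAt (fun a => β/a) (-(β/α^2)) α := by
        have h := (hasDerivAt_inv hα0.ne').const_mul β
        have e : (fun a : ℝ => β * a⁻¹) = (fun a => β/a) := by
          funext a; rw [div_eq_mul_inv]
        rw [e] at h
        refine h.congr_deriv ?_
        field_simp
      have hchainβ : HasDerivAt (fun b : ℝ => b/α) (1/α) β := by
        simpa using (hasDerivAt_id β).div_const α
      have hFα : HasDerivAt (fun a => Fm σ a β) (-(β/α * D) * -(β/α^2)) α :=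
        hFd.comp α hchainα
      have hFβ : HasDerivAt (fun b => Fm σ α b) (-(β/α * D) * (1/α)) β := by
        have h := hFd.comp β hchainβ; exact h
      rw [hFα.deriv, hFβ.deriv]
      have hiα : 1/α ≤ 2 := by
        rw [div_le_iff₀ hα0]; linarith
      have hiα0 : 0 < 1/α := by positivity
      have hβα2 : β/α^2 = (β/α) * (1/α) := by ring
      have habs1 : |-(β/α * D) * -(β/α^2)| = (β/α * D) * (β/α^2) := by
        rw [abs_mul, abs_neg, abs_neg, abs_of_pos (mul_pos hρ0 hD0), abs_of_pos (by positivity)]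
      have habs2 : |-(β/α * D) * (1/α)| = (β/α * D) * (1/α) := by
        rw [abs_mul, abs_neg, abs_of_pos (mul_pos hρ0 hD0), abs_of_pos hiα0]
      rw [habs1, habs2, hβα2]
      have hρD : β/α * D ≤ 0.0975 := by nlinarith [hρ0, hρ1, hD0, hDle]
      have hρiα : (β/α) * (1/α) ≤ 1/2 := by nlinarith [hρ0, hρ1, hiα0, hiα]
      have t1 : (β/α * D) * ((β/α) * (1/α)) ≤ 0.0975 * (1/2) :=
        mul_le_mul hρD hρiα (by positivity) (by norm_num)
      have t2 : (β/α * D) * (1/α) ≤ 0.0975 * 2 :=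
        mul_le_mul hρD hiα (by positivity) (by norm_num)
      norm_num at t1 t2 ⊢
      linarith
  · -- part (b)
    refine ⟨3000, by norm_num, ?_⟩
    intro σ κ α β hσ0 hσ1 hκ1 hκC hα hβ hρ1
    have hα0 : (0:ℝ) < α := lt_of_lt_of_le (by norm_num) hα
    have hκ1' : (0:ℝ) < κ - 1 := by linarith
    have hε0 : 0 < 1/(κ-1) := by positivity
    have hεle : 1/(κ-1) ≤ 1/2999 := by
      apply div_le_div_of_nonneg_left (by norm_num) (by norm_num) ?_
      linarith
    rcases eq_or_lt_of_le hβ with hβ0 | hβ0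
    · -- β = 0
      subst hβ0
      have e1 : (fun a => Gm κ σ a 0) = (fun _ : ℝ => Real.sqrt ((0:ℝ)^2 * Bmap σ 0^2 +
          1/(κ-1) * (1 + σ^2 - (1 - Amap σ 0 + Bmap σ 0)^2 - (0:ℝ)^2 * Bmap σ 0^2))) := by
        funext a; simp [Gm, Fm]
      have heven : (fun b => Gm κ σ α (-b)) = (fun b => Gm κ σ α b) := by
        funext b; simp [Gm, Fm, Amap, Bmap, neg_div, neg_sq]
      have h2 := deriv_comp_neg (fun b => Gm κ σ α b) (0:ℝ)
      rw [heven] at h2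
      simp only [neg_zero] at h2
      have hd2 : deriv (fun b => Gm κ σ α b) 0 = 0 := by linarith
      rw [e1, deriv_const, hd2]
      norm_num
    · -- β > 0
      have hρ0 : 0 < β/α := div_pos hβ0 hα0
      have hq : 0 < (β/α)^2 + σ^2 + σ^2*(β/α)^2 := by positivity
      obtain ⟨hFd, hTd⟩ := hasDerivAt_core σ (β/α) hq
      obtain ⟨hD0, hDle, hρD2T, hT0, hF0, hFle, hF2⟩ := bounds_core σ (β/α) hσ0 hσ1 hρ0 hρ1
      set D := 2/Real.pi * (((β/α)^2+σ^2+σ^2*(β/α)^2) + (β/α)^2) /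
        (Real.sqrt ((β/α)^2+σ^2+σ^2*(β/α)^2) * (1+(β/α)^2)^2) with hDdef
      set T := β/α * Bmap σ (β/α) with hTdef
      set Fv := 1 - Amap σ (β/α) + Bmap σ (β/α) with hFvdef
      -- derivative of x ↦ x² B(x)²
      have hT2 : HasDerivAt (fun x => x^2 * Bmap σ x^2) (2*T*D) (β/α) := by
        have h := hTd.pow 2
        have e : (fun x => x * Bmap σ x)^2 = (fun x => x^2 * Bmap σ x^2) := by
          funext x; simp only [Pi.pow_apply]; ring
        rw [e] at h
        refine h.congr_deriv ?_
        push_cast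
        ring
      have hF2d : HasDerivAt (fun x => (1 - Amap σ x + Bmap σ x)^2) (2*Fv*(-(β/α*D))) (β/α) := by
        have h := hFd.pow 2
        refine h.congr_deriv ?_
        push_cast
        ring
      -- derivative of P
      have hPd : HasDerivAt (fun x => x^2 * Bmap σ x^2 +
          1/(κ-1) * (1 + σ^2 - (1 - Amap σ x + Bmap σ x)^2 - x^2 * Bmap σ x^2))
          (2*T*D + 1/(κ-1) * (2*Fv*(β/α*D)) - 1/(κ-1) * (2*T*D)) (β/α) := by
        have h := hT2.add ((((hasDerivAt_const (β/α) ((1:ℝ)+σ^2)).sub hF2d).sub hT2).const_mul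
          (1/(κ-1)))
        refine h.congr_deriv ?_
        ring
      -- positivity of P at the point
      have hPval_pos : 0 < (β/α)^2 * Bmap σ (β/α)^2 +
          1/(κ-1) * (1 + σ^2 - Fv^2 - (β/α)^2 * Bmap σ (β/α)^2) := by
        have hT2v : (β/α)^2 * Bmap σ (β/α)^2 = T^2 := by rw [hTdef]; ring
        rw [hT2v]
        have hTT : 0 < T^2 := pow_pos hT0 2
        have hεT : 1/(κ-1) * T^2 ≤ 1/2999 * T^2 := mul_le_mul_of_nonneg_right hεle hTT.le
        have hεF : 0 ≤ 1/(κ-1) * (1 + σ^2 - Fv^2) := mul_nonneg hε0.le (by linarith [hF2])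
        nlinarith [hTT, hεT, hεF]
      have hchainα : HasDerivAt (fun a => β/a) (-(β/α^2)) α := by
        have h := (hasDerivAt_inv hα0.ne').const_mul β
        have e : (fun a : ℝ => β * a⁻¹) = (fun a => β/a) := by
          funext a; rw [div_eq_mul_inv]
        rw [e] at h
        refine h.congr_deriv ?_
        field_simp
      have hchainβ : HasDerivAt (fun b : ℝ => b/α) (1/α) β := by
        simpa using (hasDerivAt_id β).div_const α
      set Pd := 2*T*D + 1/(κ-1) * (2*Fv*(β/α*D)) - 1/(κ-1) * (2*T*D) with hPddef
      set Pv := (β/α)^2 * Bmap σ (β/α)^2 +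
          1/(κ-1) * (1 + σ^2 - Fv^2 - (β/α)^2 * Bmap σ (β/α)^2) with hPvdef
      have hsqrtP : HasDerivAt (fun x => Real.sqrt (x^2 * Bmap σ x^2 +
          1/(κ-1) * (1 + σ^2 - (1 - Amap σ x + Bmap σ x)^2 - x^2 * Bmap σ x^2)))
          (1/(2*Real.sqrt Pv) * Pd) (β/α) :=
        (Real.hasDerivAt_sqrt hPval_pos.ne').comp (β/α) hPd
      have hGα : HasDerivAt (fun a => Gm κ σ a β) ((1/(2*Real.sqrt Pv) * Pd) * -(β/α^2)) α :=
        hsqrtP.comp α hchainα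
      have hGβ : HasDerivAt (fun b => Gm κ σ α b) ((1/(2*Real.sqrt Pv) * Pd) * (1/α)) β :=
        by have h := hsqrtP.comp β hchainβ; exact h
      rw [hGα.deriv, hGβ.deriv]
      -- numeric bounds
      have hW0 : 0 < Real.sqrt Pv := Real.sqrt_pos.2 hPval_pos
      have hW : 0.999 * T ≤ Real.sqrt Pv := by
        rw [Real.le_sqrt (by positivity) hPval_pos.le]
        have hT2v : (β/α)^2 * Bmap σ (β/α)^2 = T^2 := by rw [hTdef]; ring
        rw [hPvdef, hT2v]
        have hTT : 0 < T^2 := pow_pos hT0 2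
        have hεT : 1/(κ-1) * T^2 ≤ 1/2999 * T^2 := mul_le_mul_of_nonneg_right hεle hTT.le
        have hεF : 0 ≤ 1/(κ-1) * (1 + σ^2 - Fv^2) := mul_nonneg hε0.le (by linarith [hF2])
        nlinarith [hTT, hεT, hεF]
      have hTD0 : 0 < T*D := mul_pos hT0 hD0
      have hPd0 : 0 ≤ Pd := by
        rw [hPddef]
        have hε1 : 1/(κ-1) ≤ 1 := by linarith [hεle]
        have h1 : 1/(κ-1) * (2*T*D) ≤ 1 * (2*T*D) :=
          mul_le_mul_of_nonneg_right hε1 (by linarith [hTD0])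
        have h2 : 0 ≤ 1/(κ-1) * (2*Fv*(β/α*D)) :=
          mul_nonneg hε0.le (by nlinarith [mul_pos hF0 (mul_pos hρ0 hD0)])
        linarith [hTD0]
      have hPdle : Pd ≤ 0.782 * T := by
        rw [hPddef]
        have hρD0 : 0 ≤ β/α * D := by positivity
        have s1 : 2*Fv*(β/α*D) ≤ 2*1.4*(2*T) := by
          have := mul_le_mul hFle hρD2T hρD0 (by norm_num : (0:ℝ) ≤ 1.4)
          nlinarith [this]
        have s2 : 1/(κ-1) * (2*Fv*(β/α*D)) ≤ 1/2999 * (2*1.4*(2*T)) := by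
          calc 1/(κ-1) * (2*Fv*(β/α*D)) ≤ 1/(κ-1) * (2*1.4*(2*T)) :=
                mul_le_mul_of_nonneg_left s1 hε0.le
            _ ≤ 1/2999 * (2*1.4*(2*T)) := by
                apply mul_le_mul_of_nonneg_right hεle (by nlinarith [hT0])
        have s3 : 2*T*D ≤ 2*T*0.39 := mul_le_mul_of_nonneg_left hDle (by nlinarith [hT0])
        have s4 : 0 ≤ 1/(κ-1) * (2*T*D) :=
          mul_nonneg hε0.le (by linarith [hTD0])
        linarith [hT0]
      have hiα : 1/α ≤ 2 := by rw [div_le_iff₀ hα0]; linarith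
      have hiα0 : 0 < 1/α := by positivity
      have hβα2 : β/α^2 = (β/α) * (1/α) := by ring
      have hfac0 : 0 ≤ 1/(2*Real.sqrt Pv) * Pd :=
        mul_nonneg (by positivity) hPd0
      have habs1 : |(1/(2*Real.sqrt Pv) * Pd) * -(β/α^2)| = (1/(2*Real.sqrt Pv) * Pd) * (β/α^2) := by
        rw [abs_mul, abs_neg, abs_of_nonneg hfac0, abs_of_nonneg (by positivity)]
      have habs2 : |(1/(2*Real.sqrt Pv) * Pd) * (1/α)| = (1/(2*Real.sqrt Pv) * Pd) * (1/α) := by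
        rw [abs_mul, abs_of_nonneg hfac0, abs_of_nonneg hiα0.le]
      rw [habs1, habs2]
      have hsum : β/α^2 + 1/α ≤ 2.5 := by
        rw [hβα2]
        have := mul_le_mul hρ1 hiα hiα0.le (by norm_num : (0:ℝ) ≤ 1/4)
        linarith
      have hsum0 : 0 ≤ β/α^2 + 1/α := by positivity
      have key : (1/(2*Real.sqrt Pv) * Pd) * (β/α^2) + (1/(2*Real.sqrt Pv) * Pd) * (1/α)
          = (Pd * (β/α^2 + 1/α)) / (2*Real.sqrt Pv) := by
        field_simp
      rw [key, div_le_iff₀ (by positivity)]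
      have hup : Pd * (β/α^2 + 1/α) ≤ (0.782*T) * 2.5 :=
        mul_le_mul hPdle hsum hsum0 (by linarith [hT0])
      linarith [hW, hT0, hup]
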